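/- arXiv:2107.01027 — 6 statements merged into one kernel-verified Lean document; each statement's English description precedes it below -/
import Mathlib

section
/- For every integer k ≥ 1, π/4 = 2^(k-1) · arctan(√(2 - a_{k-1}) / a_k). -/
open Real

noncomputable def a : ℕ → ℝ
  | 0 => 0
  | k + 1 => Real.sqrt (2 + a k)

lemma ha : ∀ k : ℕ, a k = 2 * Real.cos (Real.pi / 2 ^ (k + 1)) := by
  intro k
  induction k with
  | zero => simp [a]
  | succ n ih =>
      have hθpos : 0 < Real.pi / 2 ^ (n + 2) := by positivity
      have hθle : Real.pi / 2 ^ (n + 2) ≤ Real.pi / 2 := by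
        apply div_le_div_of_nonneg_left Real.pi_pos.le (by norm_num)
        calc (2:ℝ) = 2 ^ 1 := by norm_num
        _ ≤ 2 ^ (n + 2) := by
          apply pow_le_pow_right₀ (by norm_num); omega
      have hcos : 0 ≤ Real.cos (Real.pi / 2 ^ (n + 2)) :=
        Real.cos_nonneg_of_mem_Icc ⟨by linarith [Real.pi_pos], hθle⟩
      have hhalf : Real.pi / 2 ^ (n + 1) / 2 = Real.pi / 2 ^ (n + 2) := by
        rw [div_div]; ring_nf
      have h2θ : 2 * (Real.pi / 2 ^ (n + 2)) = Real.pi / 2 ^ (n + 1) := by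
        rw [pow_succ]; field_simp
      have hsq := Real.cos_sq (Real.pi / 2 ^ (n + 2))
      rw [h2θ] at hsq
      have : 2 + a n = (2 * Real.cos (Real.pi / 2 ^ (n + 2))) ^ 2 := by
        rw [ih]; nlinarith [hsq]
      rw [show a (n+1) = Real.sqrt (2 + a n) from rfl, this,
        Real.sqrt_sq (by linarith)]

theorem stmt_0 : ∀ k : ℕ, 1 ≤ k →
    Real.pi / 4 = 2 ^ (k - 1) * Real.arctan (Real.sqrt (2 - a (k - 1)) / a k) := by
  intro k hk
  obtain ⟨m, rfl⟩ : ∃ m, k = m + 1 := ⟨k - 1, by omega⟩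
  simp only [Nat.add_sub_cancel]
  set θ : ℝ := Real.pi / 2 ^ (m + 2) with hθ
  have hθpos : 0 < θ := by positivity
  have hθle : θ ≤ Real.pi / 4 := by
    apply div_le_div_of_nonneg_left Real.pi_pos.le (by norm_num)
    calc (4:ℝ) = 2 ^ 2 := by norm_num
    _ ≤ 2 ^ (m + 2) := by apply pow_le_pow_right₀ (by norm_num); omega
  have hθlt : θ < Real.pi / 2 := lt_of_le_of_lt hθle (by linarith [Real.pi_pos])
  have hcos : 0 < Real.cos θ := Real.cos_pos_of_mem_Ioo ⟨by linarith, hθlt⟩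
  have hsin : 0 ≤ Real.sin θ := Real.sin_nonneg_of_nonneg_of_le_pi hθpos.le
    (by linarith [Real.pi_pos])
  have hhalf : Real.pi / 2 ^ (m + 1) / 2 = θ := by
    rw [hθ, div_div]; ring_nf
  have h2θ : 2 * θ = Real.pi / 2 ^ (m + 1) := by
    rw [hθ, pow_succ]; field_simp
  have hsq := Real.cos_sq θ
  rw [h2θ] at hsq
  have hpyth := Real.sin_sq_add_cos_sq θ
  have h1 : 2 - a m = (2 * Real.sin θ) ^ 2 := by
    rw [ha m]; nlinarith [hsq, hpyth]
  have h2 : a (m + 1) = 2 * Real.cos θ := ha (m + 1)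
  rw [h1, h2, Real.sqrt_sq (by linarith)]
  have : 2 * Real.sin θ / (2 * Real.cos θ) = Real.tan θ := by
    rw [Real.tan_eq_sin_div_cos]; field_simp
  rw [this, Real.arctan_tan (by linarith) hθlt, hθ]
  rw [show (m+2) = m + 2 from rfl, pow_add]
  field_simp
  ring
end

section
/- For every integer N ≥ 1, π/4 = Σ_{n=1}^{N} arctan( N / ((n-1)·n + N²) ). -/
open Real Finset

theorem stmt_6 : ∀ N : ℕ, 1 ≤ N →
    Real.pi / 4 =
      ∑ n ∈ Finset.Icc 1 N, Real.arctan ((N : ℝ) / (((n : ℝ) - 1) * (n : ℝ) + (N : ℝ) ^ 2)) := by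
  intro N hN
  have hN0 : (N : ℝ) ≠ 0 := by positivity
  rw [show Finset.Icc 1 N = Finset.Ico 1 (N + 1) by rw [Finset.Ico_add_one_right_eq_Icc],
    Finset.sum_Ico_eq_sum_range]
  simp only [Nat.add_sub_cancel]
  have step : ∀ i : ℕ,
      Real.arctan ((N : ℝ) / ((((1 + i : ℕ) : ℝ) - 1) * ((1 + i : ℕ) : ℝ) + (N : ℝ) ^ 2)) =
        Real.arctan (((i + 1 : ℕ) : ℝ) / N) - Real.arctan ((i : ℝ) / N) := by
    intro i
    have hxy : (((i + 1 : ℕ) : ℝ) / N) * (-((i : ℝ) / N)) < 1 := by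
      have : (((i + 1 : ℕ) : ℝ) / N) * (-((i : ℝ) / N)) ≤ 0 := by
        push_cast; rw [mul_neg, neg_nonpos]; positivity
      linarith
    have h := Real.arctan_add hxy
    rw [Real.arctan_neg, ← sub_eq_add_neg] at h
    rw [h]
    congr 1
    push_cast
    have hden : ((i : ℝ) * (1 + i) + N ^ 2) ≠ 0 := by positivity
    field_simp
    ring_nf
  rw [Finset.sum_congr rfl fun i _ => step i,
    Finset.sum_range_sub (fun i => Real.arctan ((i : ℝ) / N))]
  simp [div_self hN0, Real.arctan_one]
end

section
/- Let α be a positive integer and let β₁, β₂ be nonzero real numbers such that π/4 = α·arctan(1/β₁) + arctan(1/β₂). Then, as an identity of complex numbers, ((β₁ + i)/(β₁ - i))^α · (β₂ + i)/(β₂ - i) = i. -/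
open Complex

lemma key_exp (β : ℝ) (hβ : β ≠ 0) :
    ((β : ℂ) + I) / ((β : ℂ) - I) = Complex.exp ((2 * Real.arctan (1/β) : ℝ) * I) := by
  have hden : ((β : ℂ) - I) ≠ 0 := by
    intro hcon
    have := congrArg Complex.im hcon
    simp at this
  have hs2 : Real.sqrt (1 + (1/β)^2) ^ 2 = 1 + (1/β)^2 := by
    rw [Real.sq_sqrt]; positivity
  have hsne : Real.sqrt (1 + (1/β)^2) ≠ 0 := by positivity
  have hb2 : β^2 + 1 ≠ 0 := by positivity
  have hc : Real.cos (2 * Real.arctan (1/β)) = (β^2 - 1)/(β^2 + 1) := by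
    rw [Real.cos_two_mul, Real.cos_arctan]
    rw [div_pow, one_pow, hs2]
    field_simp
    ring
  have hsin : Real.sin (2 * Real.arctan (1/β)) = 2*β/(β^2 + 1) := by
    rw [Real.sin_two_mul, Real.sin_arctan, Real.cos_arctan]
    have e : (2:ℝ) * (1/β / Real.sqrt (1 + (1/β)^2)) * (1 / Real.sqrt (1 + (1/β)^2))
        = 2/β / (Real.sqrt (1 + (1/β)^2))^2 := by ring
    rw [e, hs2]
    field_simp
  rw [Complex.exp_mul_I, div_eq_iff hden, ← Complex.ofReal_cos, ← Complex.ofReal_sin, hc, hsin]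
  have : ((β:ℝ)^2 + 1 : ℂ) ≠ 0 := by
    exact_mod_cast (Complex.ofReal_ne_zero.mpr hb2)
  push_cast
  field_simp
  ring_nf
  rw [Complex.I_sq]
  ring

theorem stmt_7 (α : ℕ) (hα : 0 < α) (β₁ β₂ : ℝ) (hβ₁ : β₁ ≠ 0) (hβ₂ : β₂ ≠ 0)
    (h : Real.pi / 4 = (α : ℝ) * Real.arctan (1 / β₁) + Real.arctan (1 / β₂)) :
    (((β₁ : ℂ) + I) / ((β₁ : ℂ) - I)) ^ α * (((β₂ : ℂ) + I) / ((β₂ : ℂ) - I)) = I := by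
  rw [key_exp β₁ hβ₁, key_exp β₂ hβ₂, ← Complex.exp_nat_mul, ← Complex.exp_add]
  have : (α : ℂ) * ((2 * Real.arctan (1/β₁) : ℝ) * I) + (2 * Real.arctan (1/β₂) : ℝ) * I
      = (Real.pi / 2 : ℝ) * I := by
    have h2 : (Real.pi / 2 : ℝ) = (α : ℝ) * (2 * Real.arctan (1/β₁)) + 2 * Real.arctan (1/β₂) := by
      linarith
    rw [h2]; push_cast; ring
  rw [this]
  rw [Complex.exp_mul_I]
  push_cast
  simp [Complex.cos_pi_div_two, Complex.sin_pi_div_two]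
end

section
/- Let k ≥ 2 be an integer and let β₁ be a rational number with β₁ > 1. Set φ = 2^(k-1)·arctan(2β₁/(β₁² - 1)) and suppose sin(φ) ≠ 1. Then the real number β₂ = cos(φ)/(1 - sin(φ)) is rational, i.e., there exists q ∈ ℚ with (q : ℝ) = β₂. -/
lemma aux_rat_cos_sin (θ : ℝ) (c s : ℚ) (hc : Real.cos θ = c) (hs : Real.sin θ = s) :
    ∀ n : ℕ, ∃ c' s' : ℚ, Real.cos ((2:ℝ)^n * θ) = c' ∧ Real.sin ((2:ℝ)^n * θ) = s' := by
  intro n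
  induction n with
  | zero => exact ⟨c, s, by simpa using hc, by simpa using hs⟩
  | succ n ih =>
    obtain ⟨c', s', hc', hs'⟩ := ih
    refine ⟨2*c'^2 - 1, 2*s'*c', ?_, ?_⟩
    · rw [show (2:ℝ)^(n+1)*θ = 2*((2:ℝ)^n*θ) by ring, Real.cos_two_mul, hc']
      push_cast; ring
    · rw [show (2:ℝ)^(n+1)*θ = 2*((2:ℝ)^n*θ) by ring, Real.sin_two_mul, hs', hc']
      push_cast; ring

theorem stmt_11 (k : ℕ) (hk : 2 ≤ k) (β₁ : ℚ) (hβ₁ : 1 < β₁)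
    (φ : ℝ)
    (hφ : φ = (2 : ℝ) ^ (k - 1) * Real.arctan (2 * (β₁ : ℝ) / ((β₁ : ℝ) ^ 2 - 1)))
    (hsin : Real.sin φ ≠ 1) :
    ∃ q : ℚ, (q : ℝ) = Real.cos φ / (1 - Real.sin φ) := by
  set b : ℝ := (β₁ : ℝ) with hbdef
  have hb : 1 < b := by rw [hbdef]; exact_mod_cast hβ₁
  have hb2 : (0:ℝ) < b^2 - 1 := by nlinarith
  have hb2' : b^2 - 1 ≠ 0 := ne_of_gt hb2
  have hb3 : b^2 + 1 ≠ 0 := by positivity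
  set x : ℝ := 2 * b / (b^2 - 1) with hxdef
  have hx2 : 1 + x^2 = ((b^2+1)/(b^2-1))^2 := by
    rw [hxdef]
    field_simp
    ring
  have hsqrt : Real.sqrt (1 + x^2) = (b^2+1)/(b^2-1) := by
    rw [hx2, Real.sqrt_sq (by positivity)]
  have hcos : Real.cos (Real.arctan x) = ((β₁^2 - 1)/(β₁^2 + 1) : ℚ) := by
    rw [Real.cos_arctan, hsqrt]
    push_cast
    field_simp
    rw [hbdef]; ring
  have hsin' : Real.sin (Real.arctan x) = ((2*β₁)/(β₁^2 + 1) : ℚ) := by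
    rw [Real.sin_arctan, hsqrt]
    push_cast
    rw [hxdef]
    field_simp
    rw [hbdef]; ring
  obtain ⟨c', s', hc', hs'⟩ := aux_rat_cos_sin _ _ _ hcos hsin' (k - 1)
  refine ⟨c' / (1 - s'), ?_⟩
  rw [hφ] at hsin ⊢
  rw [hc', hs']
  push_cast
  ring
end

section
/- With u₁(k) = ⌊a_k / √(2 - a_{k-1})⌋, the sequence k ↦ 2^(k-1) / u₁(k) (for k ≥ 2) converges to π/4 as k → ∞. -/
open Filter

noncomputable def u₁ (k : ℕ) : ℤ := ⌊a k / Real.sqrt (2 - a (k - 1))⌋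

open Real in
lemma a_eq (k : ℕ) : a k = 2 * Real.cos (π / 2 ^ (k + 1)) := by
  induction k with
  | zero => simp [a]
  | succ k ih =>
    have hy : (0:ℝ) < π / 2 ^ (k + 2) := by positivity
    have hy2 : π / 2 ^ (k + 2) ≤ π / 2 := by
      apply div_le_div_of_nonneg_left pi_pos.le (by norm_num)
      calc (2:ℝ) = 2^1 := by norm_num
        _ ≤ 2^(k+2) := by apply pow_le_pow_right₀ (by norm_num); omega
    have hcos : 0 ≤ Real.cos (π / 2 ^ (k + 2)) :=
      Real.cos_nonneg_of_mem_Icc ⟨by linarith, hy2⟩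
    have hdouble : π / 2 ^ (k + 1) = 2 * (π / 2 ^ (k + 2)) := by
      rw [pow_succ]; ring
    show Real.sqrt (2 + a k) = _
    rw [ih, hdouble, Real.cos_two_mul]
    have h2 : 2 + 2 * (2 * Real.cos (π / 2 ^ (k+2)) ^ 2 - 1)
        = (2 * Real.cos (π / 2 ^ (k+2)))^2 := by ring
    rw [h2, Real.sqrt_sq (by positivity)]

open Real in
lemma sqrt_two_sub (k : ℕ) :
    Real.sqrt (2 - a k) = 2 * Real.sin (π / 2 ^ (k + 2)) := by
  have hy : (0:ℝ) < π / 2 ^ (k + 2) := by positivity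
  have hy2 : π / 2 ^ (k + 2) ≤ π / 2 := by
    apply div_le_div_of_nonneg_left pi_pos.le (by norm_num)
    calc (2:ℝ) = 2^1 := by norm_num
      _ ≤ 2^(k+2) := by apply pow_le_pow_right₀ (by norm_num); omega
  have hsin : 0 ≤ Real.sin (π / 2 ^ (k + 2)) :=
    Real.sin_nonneg_of_nonneg_of_le_pi hy.le (by linarith [pi_pos])
  have hdouble : π / 2 ^ (k + 1) = 2 * (π / 2 ^ (k + 2)) := by
    rw [pow_succ]; ring
  rw [a_eq, hdouble, Real.cos_two_mul]
  have hpyth := Real.sin_sq_add_cos_sq (π / 2 ^ (k + 2))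
  have h2 : 2 - 2 * (2 * Real.cos (π / 2 ^ (k+2)) ^ 2 - 1)
      = (2 * Real.sin (π / 2 ^ (k+2)))^2 := by nlinarith
  rw [h2, Real.sqrt_sq (by positivity)]

open Real in
lemma theta_pos (k : ℕ) : (0:ℝ) < π / 2 ^ (k + 3) := by positivity

open Real in
lemma theta_lt (k : ℕ) : π / 2 ^ (k + 3) ≤ π / 2 := by
  apply div_le_div_of_nonneg_left pi_pos.le (by norm_num)
  calc (2:ℝ) = 2^1 := by norm_num
    _ ≤ 2^(k+3) := by apply pow_le_pow_right₀ (by norm_num); omega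

open Real in
lemma sin_theta_pos (k : ℕ) : 0 < Real.sin (π / 2 ^ (k + 3)) :=
  Real.sin_pos_of_pos_of_lt_pi (theta_pos k)
    (lt_of_le_of_lt (theta_lt k) (by linarith [pi_pos]))

open Real in
lemma u₁_eq (k : ℕ) :
    u₁ (k + 2) = ⌊Real.cos (π / 2 ^ (k + 3)) / Real.sin (π / 2 ^ (k + 3))⌋ := by
  have : (k + 2) - 1 = k + 1 := rfl
  rw [u₁, this, sqrt_two_sub, a_eq]
  have h : k + 2 + 1 = k + 3 := rfl
  have h2 : k + 1 + 2 = k + 3 := by omega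
  rw [h, h2, mul_div_mul_left _ _ (by norm_num : (2:ℝ) ≠ 0)]

theorem stmt_12 :
    Tendsto (fun k : ℕ => (2 : ℝ) ^ (k + 1) / (u₁ (k + 2) : ℝ)) atTop
      (nhds (Real.pi / 4)) := by
  set θ : ℕ → ℝ := fun k => Real.pi / 2 ^ (k + 3) with hθdef
  have hθpos : ∀ k, 0 < θ k := theta_pos
  -- θ → 0
  have h2pow : Tendsto (fun k : ℕ => (2:ℝ) ^ (k + 3)) atTop atTop := by
    apply (tendsto_pow_atTop_atTop_of_one_lt (by norm_num : (1:ℝ) < 2)).comp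
    exact tendsto_add_atTop_nat 3
  have hθ0 : Tendsto θ atTop (nhds 0) := tendsto_const_nhds.div_atTop h2pow
  -- sin θ / θ → 1
  have hsinc : Tendsto (fun k => Real.sin (θ k) / θ k) atTop (nhds 1) := by
    have hd : HasDerivAt Real.sin 1 0 := by simpa using Real.hasDerivAt_sin 0
    have hs := hasDerivAt_iff_tendsto_slope.mp hd
    have hθ' : Tendsto θ atTop (nhdsWithin 0 {(0:ℝ)}ᶜ) :=
      tendsto_nhdsWithin_of_tendsto_nhds_of_eventually_within _ hθ0
        (Eventually.of_forall fun k => (hθpos k).ne')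
    have := hs.comp hθ'
    convert this using 2 with k
    simp [slope_def_field, Function.comp]
  -- 2^(k+1) * sin θ → Real.pi/4
  have hA : Tendsto (fun k => (2:ℝ) ^ (k + 1) * Real.sin (θ k)) atTop (nhds (Real.pi / 4)) := by
    have heq : ∀ k, (2:ℝ) ^ (k + 1) * Real.sin (θ k) = Real.pi / 4 * (Real.sin (θ k) / θ k) := by
      intro k
      have hne := (hθpos k).ne'
      rw [hθdef]
      have h8 : (2:ℝ) ^ (k + 3) = 2 ^ (k+1) * 4 := by rw [pow_add, pow_add]; ring
      field_simp
      rw [h8]; ring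
    simp_rw [heq]
    simpa using hsinc.const_mul (Real.pi / 4)
  -- cos θ → 1, sin θ → 0
  have hB : Tendsto (fun k => Real.cos (θ k)) atTop (nhds 1) := by
    have := (Real.continuous_cos.tendsto 0).comp hθ0
    simpa [Function.comp_def] using this
  have hC : Tendsto (fun k => Real.sin (θ k)) atTop (nhds 0) := by
    have := (Real.continuous_sin.tendsto 0).comp hθ0
    simpa [Function.comp_def] using this
  -- lower and upper limits
  have hLow : Tendsto (fun k => (2:ℝ) ^ (k + 1) * Real.sin (θ k) / Real.cos (θ k))
      atTop (nhds (Real.pi / 4)) := by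
    have := hA.div hB one_ne_zero
    simpa [Pi.div_def] using this
  have hUp : Tendsto
      (fun k => (2:ℝ) ^ (k + 1) * Real.sin (θ k) / (Real.cos (θ k) - Real.sin (θ k)))
      atTop (nhds (Real.pi / 4)) := by
    have := hA.div (hB.sub hC) (by norm_num)
    simpa [Pi.div_def] using this
  -- eventual bounds
  have hEv : ∀ᶠ k in atTop, Real.sin (θ k) < 1/5 ∧ 4/5 < Real.cos (θ k) := by
    filter_upwards [hC.eventually (eventually_lt_nhds (by norm_num : (0:ℝ) < 1/5)),
      hB.eventually (eventually_gt_nhds (by norm_num : (4:ℝ)/5 < 1))] with k h1 h2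
    exact ⟨h1, h2⟩
  apply tendsto_of_tendsto_of_tendsto_of_le_of_le' hLow hUp
  · filter_upwards [hEv] with k ⟨hs, hc⟩
    have hsp := sin_theta_pos k
    have hcgt : 4 < Real.cos (θ k) / Real.sin (θ k) := by
      rw [lt_div_iff₀ hsp]; nlinarith
    have hfl : (4:ℤ) ≤ ⌊Real.cos (θ k) / Real.sin (θ k)⌋ := by
      rw [Int.le_floor]; exact_mod_cast hcgt.le
    have hfl' : (0:ℝ) < (⌊Real.cos (θ k) / Real.sin (θ k)⌋ : ℝ) := by
      exact_mod_cast lt_of_lt_of_le (by norm_num) hfl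
    have hle : ((⌊Real.cos (θ k) / Real.sin (θ k)⌋ : ℝ))
        ≤ Real.cos (θ k) / Real.sin (θ k) := Int.floor_le _
    rw [u₁_eq]
    have : (2:ℝ) ^ (k + 1) * Real.sin (θ k) / Real.cos (θ k)
        = (2:ℝ) ^ (k + 1) / (Real.cos (θ k) / Real.sin (θ k)) := by
      rw [div_div_eq_mul_div]
    rw [this]
    gcongr
  · filter_upwards [hEv] with k ⟨hs, hc⟩
    have hsp := sin_theta_pos k
    have hcgt : 4 < Real.cos (θ k) / Real.sin (θ k) := by
      rw [lt_div_iff₀ hsp]; nlinarith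
    have hsub : Real.cos (θ k) / Real.sin (θ k) - 1
        < (⌊Real.cos (θ k) / Real.sin (θ k)⌋ : ℝ) := Int.sub_one_lt_floor _
    rw [u₁_eq]
    have heq : (2:ℝ) ^ (k + 1) * Real.sin (θ k) / (Real.cos (θ k) - Real.sin (θ k))
        = (2:ℝ) ^ (k + 1) / ((Real.cos (θ k) - Real.sin (θ k)) / Real.sin (θ k)) := by
      rw [div_div_eq_mul_div]
    have heq2 : (Real.cos (θ k) - Real.sin (θ k)) / Real.sin (θ k)
        = Real.cos (θ k) / Real.sin (θ k) - 1 := by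
      field_simp
      rw [sub_div, div_self (ne_of_gt hsp : Real.sin (θ k) ≠ 0)]
    rw [heq, heq2]
    gcongr
    · linarith
end

section
/- With u₁(k) = ⌊a_k / √(2 - a_{k-1})⌋, the sequence k ↦ (a_k / √(2 - a_{k-1})) / u₁(k) (for k ≥ 2) converges to 1 as k → ∞. -/
open Filter

lemma a_nonneg : ∀ k, 0 ≤ a k
  | 0 => le_refl 0
  | _ + 1 => Real.sqrt_nonneg _

lemma a_lt_two : ∀ k, a k < 2
  | 0 => by norm_num [a]
  | k + 1 => by
    have h := a_lt_two k
    have h0 := a_nonneg k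
    show Real.sqrt (2 + a k) < 2
    nlinarith [Real.sq_sqrt (by linarith : (0:ℝ) ≤ 2 + a k),
      Real.sqrt_nonneg (2 + a k)]

lemma sqrt_two_le_a (k : ℕ) : Real.sqrt 2 ≤ a (k + 1) := by
  show Real.sqrt 2 ≤ Real.sqrt (2 + a k)
  exact Real.sqrt_le_sqrt (by linarith [a_nonneg k])

lemma one_le_a (k : ℕ) : 1 ≤ a (k + 1) :=
  le_trans (by nlinarith [Real.sq_sqrt (by norm_num : (0:ℝ) ≤ 2), Real.sqrt_nonneg 2]
    : (1:ℝ) ≤ Real.sqrt 2) (sqrt_two_le_a k)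

lemma two_sub_a_succ (k : ℕ) : 2 - a (k + 1) = (2 - a k) / (2 + a (k + 1)) := by
  have hsq : a (k + 1) ^ 2 = 2 + a k := by
    show Real.sqrt (2 + a k) ^ 2 = 2 + a k
    exact Real.sq_sqrt (by linarith [a_nonneg k])
  have hpos : (0:ℝ) < 2 + a (k + 1) := by linarith [a_nonneg (k+1)]
  field_simp
  nlinarith [hsq]

lemma decay : ∀ k, 2 - a k ≤ 2 / 3 ^ k
  | 0 => by norm_num [a]
  | k + 1 => by
    have ih := decay k
    rw [two_sub_a_succ k]
    have h1 : (3:ℝ) ≤ 2 + a (k + 1) := by linarith [one_le_a k]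
    have h2 : (0:ℝ) ≤ 2 - a k := by linarith [(a_lt_two k).le]
    calc (2 - a k) / (2 + a (k + 1)) ≤ (2 - a k) / 3 :=
          div_le_div_of_nonneg_left h2 (by norm_num) h1
      _ ≤ (2 / 3 ^ k) / 3 := div_le_div_of_nonneg_right ih (by norm_num)
      _ = 2 / 3 ^ (k + 1) := by ring

lemma sqrt_three_pow (n : ℕ) : Real.sqrt 3 ^ n = Real.sqrt (3 ^ n) := by
  induction n with
  | zero => simp
  | succ n ih => rw [pow_succ, pow_succ, ih, ← Real.sqrt_mul (by positivity)]

lemma g_lb (k : ℕ) : Real.sqrt 3 ^ (k + 1) ≤ a (k + 2) / Real.sqrt (2 - a (k + 1)) := by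
  have hlt := a_lt_two (k + 1)
  have hpos : (0:ℝ) < 2 - a (k + 1) := by linarith
  have hspos : 0 < Real.sqrt (2 - a (k + 1)) := Real.sqrt_pos.mpr hpos
  rw [le_div_iff₀ hspos]
  have h1 : Real.sqrt (2 - a (k + 1)) ≤ Real.sqrt (2 / 3 ^ (k + 1)) :=
    Real.sqrt_le_sqrt (decay (k + 1))
  have h2 : Real.sqrt (2 / 3 ^ (k + 1)) = Real.sqrt 2 / Real.sqrt 3 ^ (k + 1) := by
    rw [Real.sqrt_div (by norm_num : (0:ℝ) ≤ 2), sqrt_three_pow]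
  have h3 : (0:ℝ) < Real.sqrt 3 ^ (k + 1) := by positivity
  calc Real.sqrt 3 ^ (k + 1) * Real.sqrt (2 - a (k + 1))
      ≤ Real.sqrt 3 ^ (k + 1) * (Real.sqrt 2 / Real.sqrt 3 ^ (k + 1)) :=
        mul_le_mul_of_nonneg_left (h1.trans_eq h2) h3.le
    _ = Real.sqrt 2 := by field_simp
    _ ≤ a (k + 2) := sqrt_two_le_a (k + 1)

theorem stmt_13 :
    Tendsto (fun k : ℕ => (a (k + 2) / Real.sqrt (2 - a (k + 1))) / (u₁ (k + 2) : ℝ)) atTop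
      (nhds 1) := by
  set g : ℕ → ℝ := fun k => a (k + 2) / Real.sqrt (2 - a (k + 1)) with hgdef
  have hone_lt : (1:ℝ) < Real.sqrt 3 := by
    rw [show (1:ℝ) = Real.sqrt 1 by simp]
    exact Real.sqrt_lt_sqrt (by norm_num) (by norm_num)
  have hg : Tendsto g atTop atTop := by
    apply tendsto_atTop_mono g_lb
    exact (tendsto_pow_atTop_atTop_of_one_lt hone_lt).comp (tendsto_add_atTop_nat 1)
  have hu : ∀ k, (u₁ (k + 2) : ℝ) = (⌊g k⌋ : ℝ) := fun k => rfl
  have hg1 : Tendsto (fun k => g k - 1) atTop atTop := by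
    simpa [sub_eq_add_neg] using tendsto_atTop_add_const_right atTop (-1 : ℝ) hg
  have hupper : Tendsto (fun k => 1 + 1 / (g k - 1)) atTop (nhds 1) := by
    have h2 : Tendsto (fun k => 1 / (g k - 1)) atTop (nhds 0) := by
      simpa [one_div, Function.comp_def] using tendsto_inv_atTop_zero.comp hg1
    simpa using tendsto_const_nhds.add h2
  apply tendsto_of_tendsto_of_tendsto_of_le_of_le' (tendsto_const_nhds) hupper
  · filter_upwards [hg.eventually_ge_atTop 2] with k hk
    have hfl : (2:ℤ) ≤ ⌊g k⌋ := Int.le_floor.mpr (by exact_mod_cast hk)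
    have hflR : (0:ℝ) < (⌊g k⌋ : ℝ) := by exact_mod_cast lt_of_lt_of_le (by norm_num) hfl
    rw [hu]
    exact (one_le_div hflR).mpr (Int.floor_le _)
  · filter_upwards [hg.eventually_ge_atTop 2] with k hk
    have hfl : g k - 1 ≤ (⌊g k⌋ : ℝ) := (Int.sub_one_lt_floor _).le
    have hpos : (0:ℝ) < g k - 1 := by linarith
    rw [hu]
    calc g k / (⌊g k⌋ : ℝ) ≤ g k / (g k - 1) :=
          div_le_div_of_nonneg_left (by linarith) hpos hfl
      _ = 1 + 1 / (g k - 1) := by field_simp; ring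
end
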